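/- Let n ≥ 2 and a ≥ 2 be integers, set α = 1 - 1/a, and for 1 ≤ i ≤ n define Q_a(i) = a^{-n} Σ_{k=1}^{a} (k-1)^{n-i} k^{i-1} (with 0^0 = 1). Then for every 1 ≤ i ≤ n, (1/a)·α^{n-i+1}/(1-α^n) ≤ Q_a(i) ≤ (1/a)·α^{n-i}/(1-α^{n-1}). Consequently the separation distance SEP(a) = 1 - n·Q_a(1) satisfies 1 - (n/a)·α^{n-1}/(1-α^{n-1}) ≤ SEP(a) ≤ 1 - (n/a)·α^{n}/(1-α^{n}). -/

import Mathlib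

lemma sum_Icc_one_shift (a : ℕ) (f : ℕ → ℝ) :
    ∑ k ∈ Finset.Icc 1 a, f k = ∑ j ∈ Finset.range a, f (j+1) := by
  rw [← Finset.Ico_add_one_right_eq_Icc, Finset.sum_Ico_eq_sum_range]
  simp [Nat.add_comm]

/-- Bounds on `Q_a(i)`, the chance that the original bottom card is at position `i` after an
`a`-shuffle, and the resulting bounds on the separation distance `SEP(a) = 1 - n·Q_a(1)`. -/
theorem statement4 (n a : ℕ) (hn : 2 ≤ n) (ha : 2 ≤ a)
    (α : ℝ) (hα : α = 1 - 1 / (a : ℝ))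
    (Q : ℕ → ℝ)
    (hQ : ∀ i, Q i = (1 / (a : ℝ) ^ n) *
      ∑ k ∈ Finset.Icc 1 a, ((k : ℝ) - 1) ^ (n - i) * (k : ℝ) ^ (i - 1)) :
    (∀ i, 1 ≤ i → i ≤ n →
      (1 / (a : ℝ)) * α ^ (n - i + 1) / (1 - α ^ n) ≤ Q i ∧
      Q i ≤ (1 / (a : ℝ)) * α ^ (n - i) / (1 - α ^ (n - 1))) ∧
    1 - ((n : ℝ) / a) * α ^ (n - 1) / (1 - α ^ (n - 1)) ≤ 1 - (n : ℝ) * Q 1 ∧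
    1 - (n : ℝ) * Q 1 ≤ 1 - ((n : ℝ) / a) * α ^ n / (1 - α ^ n) := by
  have ha0R : (0:ℝ) < a := by positivity
  have ha2R : (2:ℝ) ≤ a := by exact_mod_cast ha
  have hα0 : 0 < α := by
    rw [hα]
    have : (1:ℝ)/a ≤ 1/2 := by
      apply one_div_le_one_div_of_le <;> linarith
    linarith
  have hα1 : α < 1 := by
    rw [hα]; have : (0:ℝ) < 1/a := by positivity
    linarith
  have h1mα : 1 - α = 1/(a:ℝ) := by rw [hα]; ring
  have haα : (a:ℝ) - 1 = α * a := by
    rw [hα]; field_simp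
  set T : ℕ → ℝ := fun i => ∑ j ∈ Finset.range a, (j:ℝ)^(n-i) * ((j:ℝ)+1)^(i-1) with hT
  have hTnn : ∀ i, 0 ≤ T i := by
    intro i
    apply Finset.sum_nonneg
    intro j _
    positivity
  have hkey : ∀ j : ℕ, j + 1 ≤ a → (j:ℝ) ≤ α * ((j:ℝ)+1) := by
    intro j hj
    have hj' : (j:ℝ)+1 ≤ a := by exact_mod_cast hj
    rw [hα]
    have e : (1 - 1/(a:ℝ)) * ((j:ℝ)+1) = ((j:ℝ)+1) - ((j:ℝ)+1)/a := by ring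
    rw [e]
    have : ((j:ℝ)+1)/a ≤ 1 := by rw [div_le_one ha0R]; exact hj'
    linarith
  -- F1 : total sum
  have hF1 : ∑ m ∈ Finset.range n, T (m+1) = (a:ℝ)^n := by
    have e1 : ∀ m, T (m+1) = ∑ j ∈ Finset.range a, ((j:ℝ)+1)^m * (j:ℝ)^(n-1-m) := by
      intro m
      simp only [hT]
      apply Finset.sum_congr rfl
      intro j _
      have e : n - (m+1) = n - 1 - m := by omega
      rw [e, Nat.add_sub_cancel]
      ring
    calc ∑ m ∈ Finset.range n, T (m+1)
        = ∑ j ∈ Finset.range a, ∑ m ∈ Finset.range n, ((j:ℝ)+1)^m * (j:ℝ)^(n-1-m) := by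
          rw [Finset.sum_congr rfl fun m _ => e1 m, Finset.sum_comm]
      _ = ∑ j ∈ Finset.range a, (((j:ℝ)+1)^n - (j:ℝ)^n) := by
          apply Finset.sum_congr rfl
          intro j _
          have := geom_sum₂_mul ((j:ℝ)+1) (j:ℝ) n
          simp only [add_sub_cancel_left, mul_one] at this
          linarith [this]
      _ = (a:ℝ)^n := by
          have := Finset.sum_range_sub (fun j : ℕ => ((j:ℕ):ℝ)^n) a
          simp only [Nat.cast_add, Nat.cast_one] at this
          rw [this]
          simp [zero_pow (show n ≠ 0 by omega)]
  -- step inequality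
  have hstep : ∀ i, 1 ≤ i → i + 1 ≤ n → T i ≤ α * T (i+1) := by
    intro i h1 h2
    simp only [hT]
    rw [Finset.mul_sum]
    apply Finset.sum_le_sum
    intro j hj
    have hja : j + 1 ≤ a := by
      simp only [Finset.mem_range] at hj; omega
    have e3 : n - i = (n - (i+1)) + 1 := by omega
    have e4 : (i+1) - 1 = (i - 1) + 1 := by omega
    rw [e3, e4, pow_succ, pow_succ]
    have hnn : (0:ℝ) ≤ (j:ℝ)^(n-(i+1)) * ((j:ℝ)+1)^(i-1) := by positivity
    calc (j:ℝ)^(n-(i+1)) * (j:ℝ) * ((j:ℝ)+1)^(i-1)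
        = (j:ℝ) * ((j:ℝ)^(n-(i+1)) * ((j:ℝ)+1)^(i-1)) := by ring
      _ ≤ (α * ((j:ℝ)+1)) * ((j:ℝ)^(n-(i+1)) * ((j:ℝ)+1)^(i-1)) :=
          mul_le_mul_of_nonneg_right (hkey j hja) hnn
      _ = α * ((j:ℝ)^(n-(i+1)) * (((j:ℝ)+1)^(i-1) * ((j:ℝ)+1))) := by ring
  -- chain
  have hchain : ∀ d i, 1 ≤ i → i + d ≤ n → T i ≤ α^d * T (i+d) := by
    intro d
    induction d with
    | zero => intro i h1 h2; simp
    | succ d ih =>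
        intro i h1 h2
        calc T i ≤ α^d * T (i+d) := ih i h1 (by omega)
          _ ≤ α^d * (α * T (i+d+1)) := by
              apply mul_le_mul_of_nonneg_left (hstep (i+d) (by omega) (by omega))
                (pow_nonneg hα0.le d)
          _ = α^(d+1) * T (i+(d+1)) := by rw [pow_succ]; ring_nf
  -- T n = T 1 + a^(n-1)
  have hF4 : T n = T 1 + (a:ℝ)^(n-1) := by
    have e1 : T n = ∑ j ∈ Finset.range a, (((j:ℕ)+1:ℕ):ℝ)^(n-1) := by
      simp only [hT]
      apply Finset.sum_congr rfl
      intro j _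
      rw [Nat.sub_self]
      push_cast
      ring
    have e2 : T 1 = ∑ j ∈ Finset.range a, ((j:ℕ):ℝ)^(n-1) := by
      simp only [hT]
      apply Finset.sum_congr rfl
      intro j _
      rw [Nat.sub_self]
      ring
    have e3 := Finset.sum_range_succ' (fun j : ℕ => ((j:ℕ):ℝ)^(n-1)) a
    rw [Finset.sum_range_succ] at e3
    have e0 : ((0:ℕ):ℝ)^(n-1) = 0 := by
      simp [zero_pow (show n - 1 ≠ 0 by omega)]
    rw [e1, e2]
    rw [e0] at e3
    push_cast at e3 ⊢
    linarith
  -- shift upper bound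
  have hF5 : ∀ i, 1 ≤ i → i ≤ n → T i ≤ α^(n-1) * T i + (a:ℝ)^(n-1) * α^(n-i) := by
    intro i h1 h2
    have hea : a = (a-1) + 1 := by omega
    have hsplit : T i = (∑ j ∈ Finset.range (a-1), (j:ℝ)^(n-i) * ((j:ℝ)+1)^(i-1))
        + ((a:ℝ)-1)^(n-i) * (a:ℝ)^(i-1) := by
      have e := Finset.sum_range_succ (fun j : ℕ => (j:ℝ)^(n-i) * ((j:ℝ)+1)^(i-1)) (a-1)
      rw [← hea] at e
      simp only [hT]
      rw [e]
      have h1a : (((a-1:ℕ)):ℝ) = (a:ℝ) - 1 := by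
        have h1' : (1:ℕ) ≤ a := by omega
        push_cast [h1']
        ring
      rw [h1a, show (a:ℝ) - 1 + 1 = (a:ℝ) by ring]
    have hlast : ((a:ℝ)-1)^(n-i) * (a:ℝ)^(i-1) = (a:ℝ)^(n-1) * α^(n-i) := by
      rw [haα, mul_pow]
      rw [show (n:ℕ)-1 = (n-i) + (i-1) by omega, pow_add]
      ring
    -- termwise shifted bound
    have hterm : ∀ j ∈ Finset.range (a-1),
        (j:ℝ)^(n-i) * ((j:ℝ)+1)^(i-1) ≤ α^(n-1) * (((j:ℝ)+1)^(n-i) * (((j:ℝ)+1)+1)^(i-1)) := by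
      intro j hj
      have hja : j + 1 ≤ a - 1 := by
        simp only [Finset.mem_range] at hj; omega
      have h5 : (j:ℝ)^(n-i) ≤ (α * ((j:ℝ)+1))^(n-i) := by
        apply pow_le_pow_left₀ (by positivity) (hkey j (by omega))
      have h6 : ((j:ℝ)+1)^(i-1) ≤ (α * (((j:ℝ)+1)+1))^(i-1) := by
        apply pow_le_pow_left₀ (by positivity)
        have := hkey (j+1) (by omega)
        push_cast at this
        linarith
      calc (j:ℝ)^(n-i) * ((j:ℝ)+1)^(i-1)
          ≤ (α * ((j:ℝ)+1))^(n-i) * (α * (((j:ℝ)+1)+1))^(i-1) := by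
            apply mul_le_mul h5 h6 (by positivity) (by positivity)
        _ = α^(n-1) * (((j:ℝ)+1)^(n-i) * (((j:ℝ)+1)+1)^(i-1)) := by
            rw [mul_pow, mul_pow, show (n:ℕ)-1 = (n-i) + (i-1) by omega, pow_add]
            ring
    have hshiftsum : (∑ j ∈ Finset.range (a-1), ((j:ℝ)+1)^(n-i) * (((j:ℝ)+1)+1)^(i-1)) ≤ T i := by
      have e5 := Finset.sum_range_succ' (fun j : ℕ => (j:ℝ)^(n-i) * ((j:ℝ)+1)^(i-1)) (a-1)
      rw [← hea] at e5
      have : T i = (∑ j ∈ Finset.range (a-1),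
          (((j:ℕ)+1:ℕ):ℝ)^(n-i) * ((((j:ℕ)+1:ℕ):ℝ)+1)^(i-1))
          + ((0:ℕ):ℝ)^(n-i) * (((0:ℕ):ℝ)+1)^(i-1) := by
        simp only [hT]
        rw [e5]
      rw [this]
      push_cast
      have : (0:ℝ) ≤ ((0:ℕ):ℝ)^(n-i) * (((0:ℕ):ℝ)+1)^(i-1) := by positivity
      push_cast at this
      linarith [this]
    calc T i = (∑ j ∈ Finset.range (a-1), (j:ℝ)^(n-i) * ((j:ℝ)+1)^(i-1))
        + ((a:ℝ)-1)^(n-i) * (a:ℝ)^(i-1) := hsplit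
      _ ≤ (∑ j ∈ Finset.range (a-1), α^(n-1) * (((j:ℝ)+1)^(n-i) * (((j:ℝ)+1)+1)^(i-1)))
        + (a:ℝ)^(n-1) * α^(n-i) := by
          rw [hlast]
          exact add_le_add (Finset.sum_le_sum hterm) le_rfl
      _ = α^(n-1) * (∑ j ∈ Finset.range (a-1), ((j:ℝ)+1)^(n-i) * (((j:ℝ)+1)+1)^(i-1))
        + (a:ℝ)^(n-1) * α^(n-i) := by rw [Finset.mul_sum]
      _ ≤ α^(n-1) * T i + (a:ℝ)^(n-1) * α^(n-i) := by
          have := mul_le_mul_of_nonneg_left hshiftsum (pow_nonneg hα0.le (n-1))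
          linarith
  -- geometric sums
  have hαne1 : α ≠ 1 := ne_of_lt hα1
  have hGa : ∀ t : ℕ, ∑ m ∈ Finset.range t, α^m = (a:ℝ) * (1 - α^t) := by
    intro t
    have e : (α^t - 1)/(α - 1) = (1 - α^t)/(1-α) := by
      rw [← neg_div_neg_eq, neg_sub, neg_sub]
    rw [geom_sum_eq hαne1, e, h1mα]
    field_simp
  have h1mαn : 0 < 1 - α^n := by
    have := pow_lt_one₀ hα0.le hα1 (show n ≠ 0 by omega)
    linarith
  have h1mαn1 : 0 < 1 - α^(n-1) := by
    have := pow_lt_one₀ hα0.le hα1 (show n - 1 ≠ 0 by omega)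
    linarith
  -- upper bound on T
  have hTupper : ∀ i, 1 ≤ i → i ≤ n → T i * (1 - α^(n-1)) ≤ (a:ℝ)^(n-1) * α^(n-i) := by
    intro i h1 h2
    have h := hF5 i h1 h2
    nlinarith [h]
  -- lower bound on T
  have hTlower : ∀ i, 1 ≤ i → i ≤ n → (a:ℝ)^(n-1) * α^(n-i+1) ≤ T i * (1 - α^n) := by
    intro i h1 h2
    have hsplitn : (a:ℝ)^n = (∑ m ∈ Finset.range i, T (m+1))
        + (∑ m ∈ Finset.range (n-i), T (i+m+1)) := by
      rw [← hF1]
      have e := Finset.sum_range_add (fun m : ℕ => T (m+1)) i (n-i)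
      rw [show i + (n-i) = n by omega] at e
      rw [e]
    have hb1 : ∑ m ∈ Finset.range i, T (m+1) ≤ (∑ m ∈ Finset.range i, α^(i-1-m)) * T i := by
      rw [Finset.sum_mul]
      apply Finset.sum_le_sum
      intro m hm
      have hmi : m < i := Finset.mem_range.mp hm
      have hc := hchain (i-m-1) (m+1) (by omega) (by omega)
      rw [show m+1+(i-m-1) = i by omega] at hc
      rw [show i-1-m = i-m-1 by omega]
      exact hc
    have hTnB : T n ≤ α^(i-1) * T i + (a:ℝ)^(n-1) := by
      rw [hF4]
      have hc := hchain (i-1) 1 le_rfl (by omega)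
      rw [show 1+(i-1) = i by omega] at hc
      linarith
    have hb2 : ∑ m ∈ Finset.range (n-i), T (i+m+1)
        ≤ (∑ m ∈ Finset.range (n-i), α^(n-i-1-m)) * (α^(i-1) * T i + (a:ℝ)^(n-1)) := by
      rw [Finset.sum_mul]
      apply Finset.sum_le_sum
      intro m hm
      have hmi : m < n - i := Finset.mem_range.mp hm
      have hc := hchain (n-(i+m+1)) (i+m+1) (by omega) (by omega)
      rw [show i+m+1+(n-(i+m+1)) = n by omega] at hc
      rw [show n-i-1-m = n-(i+m+1) by omega]
      exact le_trans hc (mul_le_mul_of_nonneg_left hTnB (pow_nonneg hα0.le _))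
    have hrefl1 : ∑ m ∈ Finset.range i, α^(i-1-m) = (a:ℝ) * (1 - α^i) := by
      rw [Finset.sum_range_reflect (fun m => α^m) i, hGa]
    have hrefl2 : ∑ m ∈ Finset.range (n-i), α^(n-i-1-m) = (a:ℝ) * (1 - α^(n-i)) := by
      rw [Finset.sum_range_reflect (fun m => α^m) (n-i), hGa]
    rw [hrefl1] at hb1
    rw [hrefl2] at hb2
    have hcomb : (a:ℝ)^n ≤ (a:ℝ) * (1 - α^i) * T i
        + (a:ℝ) * (1 - α^(n-i)) * (α^(i-1) * T i + (a:ℝ)^(n-1)) := by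
      rw [hsplitn]; exact add_le_add hb1 hb2
    have han : (a:ℝ)^n = a * (a:ℝ)^(n-1) := by
      have e := pow_succ' (a:ℝ) (n-1)
      rw [show (n-1)+1 = n by omega] at e
      exact e
    have hstep1 : (a:ℝ)^(n-1) ≤ (1 - α^i)*T i + (1 - α^(n-i))*(α^(i-1)*T i + (a:ℝ)^(n-1)) := by
      apply le_of_mul_le_mul_left _ ha0R
      calc (a:ℝ) * (a:ℝ)^(n-1) = (a:ℝ)^n := han.symm
        _ ≤ (a:ℝ) * (1 - α^i) * T i
            + (a:ℝ) * (1 - α^(n-i)) * (α^(i-1) * T i + (a:ℝ)^(n-1)) := hcomb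
        _ = (a:ℝ) * ((1 - α^i)*T i + (1 - α^(n-i))*(α^(i-1)*T i + (a:ℝ)^(n-1))) := by ring
    have hstep2 : α^(n-i) * (a:ℝ)^(n-1) ≤ (1 - α^i)*T i + (1 - α^(n-i))*(α^(i-1)*T i) := by
      nlinarith [hstep1]
    have hu1 : α^i ≤ 1 := pow_le_one₀ hα0.le hα1.le
    have huv : α^n = α^i * α^(n-i) := by
      rw [← pow_add]
      congr 1
      omega
    have huw : α^i = α * α^(i-1) := by
      have e := pow_succ' α (i-1)
      rw [show (i-1)+1 = i by omega] at e
      exact e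
    have hv1 : α^(n-i+1) = α * α^(n-i) := by rw [pow_succ]; ring
    have e : T i * (1 - α^n) = α * ((1 - α^i)*T i + (1 - α^(n-i))*(α^(i-1)*T i))
        + (1-α)*(1-α^i)*T i := by
      rw [huv, huw]; ring
    have h3 := mul_le_mul_of_nonneg_left hstep2 hα0.le
    have h4 : 0 ≤ (1-α)*(1-α^i)*T i :=
      mul_nonneg (mul_nonneg (by linarith) (by linarith)) (hTnn i)
    rw [e, hv1]
    linarith [h3, h4]
  have han' : (a:ℝ)^n = a * (a:ℝ)^(n-1) := by
    have e := pow_succ' (a:ℝ) (n-1)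
    rw [show (n-1)+1 = n by omega] at e
    exact e
  have hQT : ∀ i, Q i = 1/(a:ℝ)^n * T i := by
    intro i
    rw [hQ i, sum_Icc_one_shift]
    congr 1
    apply Finset.sum_congr rfl
    intro j _
    push_cast
    norm_num
  have part1 : ∀ i, 1 ≤ i → i ≤ n →
      (1/(a:ℝ))*α^(n-i+1)/(1-α^n) ≤ Q i ∧ Q i ≤ (1/(a:ℝ))*α^(n-i)/(1-α^(n-1)) := by
    intro i h1 h2
    rw [hQT i]
    have hpn1 : (0:ℝ) < (a:ℝ)^(n-1) := by positivity
    constructor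
    · rw [div_le_iff₀ h1mαn]
      have hlow := hTlower i h1 h2
      calc (1/(a:ℝ))*α^(n-i+1)
          = 1/(a:ℝ)^n * ((a:ℝ)^(n-1) * α^(n-i+1)) := by
            rw [han']
            field_simp
        _ ≤ 1/(a:ℝ)^n * (T i * (1-α^n)) :=
            mul_le_mul_of_nonneg_left hlow (by positivity)
        _ = 1/(a:ℝ)^n * T i * (1-α^n) := by ring
    · rw [le_div_iff₀ h1mαn1]
      have hup := hTupper i h1 h2
      calc 1/(a:ℝ)^n * T i * (1-α^(n-1))
          = 1/(a:ℝ)^n * (T i * (1-α^(n-1))) := by ring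
        _ ≤ 1/(a:ℝ)^n * ((a:ℝ)^(n-1) * α^(n-i)) :=
            mul_le_mul_of_nonneg_left hup (by positivity)
        _ = (1/(a:ℝ))*α^(n-i) := by
            rw [han']
            field_simp
  obtain ⟨l1, u1⟩ := part1 1 le_rfl (by omega)
  rw [show n - 1 + 1 = n by omega] at l1
  refine ⟨part1, ?_, ?_⟩
  · have h2 := mul_le_mul_of_nonneg_left u1 (show (0:ℝ) ≤ (n:ℝ) by positivity)
    have e2 : (n:ℝ) * ((1/(a:ℝ))*α^(n-1)/(1-α^(n-1))) = ((n:ℝ)/a)*α^(n-1)/(1-α^(n-1)) := by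
      ring
    linarith
  · have h2 := mul_le_mul_of_nonneg_left l1 (show (0:ℝ) ≤ (n:ℝ) by positivity)
    have e2 : (n:ℝ) * ((1/(a:ℝ))*α^n/(1-α^n)) = ((n:ℝ)/a)*α^n/(1-α^n) := by
      ring
    linarith
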